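/- For 0 < E < 1 real, F := E^{1/k}, and fixed integers k ≥ 1, 0 ≤ r ≤ k-1, l ≥ 0, the sequence S_n := ∑_{q=0}^∞ C(n + r + k·q, n) · E^q · q^l satisfies: there exists a nonzero finite constant C such that S_n / (n^l · (1-F)^{-n}) → C as n → ∞. -/

import Mathlib

open Filter

open Finset Complex


open Filter Finset Complex



open Filter Finset

lemma aux_choose (n i m : ℕ) :
    m.descFactorial i * (n + m).choose n = (n+i).descFactorial i * (n + m).choose (n + i) := by
  rcases le_or_gt i m with h | h
  · have h1 : (n+m).choose (n+i) * (n+i).choose n = (n+m).choose n * (n+m-n).choose (n+i-n) :=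
      Nat.choose_mul (by omega)
    have h2 : n + m - n = m := by omega
    have h3 : n + i - n = i := by omega
    rw [h2, h3] at h1
    rw [Nat.descFactorial_eq_factorial_mul_choose m i,
        Nat.descFactorial_eq_factorial_mul_choose (n+i) i]
    have h4 : (n+i).choose i = (n+i).choose n := by
      have := Nat.choose_symm (n := n+i) (k := i) (by omega)
      rw [show n + i - i = n by omega] at this
      exact this.symm
    rw [h4, mul_assoc, mul_assoc]
    congr 1
    rw [mul_comm (m.choose i), ← h1]
    ring
  · simp [Nat.descFactorial_eq_zero_iff_lt.2 h,
      Nat.choose_eq_zero_of_lt (show n+m < n+i by omega)]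



open Filter Finset

lemma aux_bcoeff (k r : ℕ) (hk : (k:ℝ) ≠ 0) (l : ℕ) :
    ∃ b : ℕ → ℝ, b l = ((k:ℝ)^l)⁻¹ ∧ (∀ i, l < i → b i = 0) ∧
      ∀ q : ℕ, (q:ℝ)^l = ∑ i ∈ Finset.range (l+1),
        b i * (((r + k*q).descFactorial i : ℕ) : ℝ) := by
  induction l with
  | zero =>
      refine ⟨fun i => if i = 0 then 1 else 0, by simp,
        fun i hi => by simp [show i ≠ 0 by omega], ?_⟩
      intro q; simp
  | succ l ih =>
      obtain ⟨b, hbl, hb0, hbq⟩ := ih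
      set c : ℕ → ℝ := fun j => (if j = 0 then 0 else b (j-1)) / k + ((j:ℝ) - r) * b j / k
        with hc
      have h0 : b (l+1) = 0 := hb0 _ (by omega)
      refine ⟨c, ?_, ?_, ?_⟩
      · simp only [hc, if_neg (Nat.succ_ne_zero l), Nat.add_sub_cancel, h0, hbl]
        simp [pow_succ, div_eq_mul_inv, mul_inv, mul_comm]
      · intro i hi
        have h1 : b (i-1) = 0 := hb0 _ (by omega)
        have h2 : b i = 0 := hb0 _ (by omega)
        simp [hc, h1, h2, show i ≠ 0 by omega]
      · intro q
        set d : ℕ → ℝ := fun i => (((r + k*q).descFactorial i : ℕ) : ℝ) with hd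
        have key : ∀ i : ℕ, (q:ℝ) * d i = (d (i+1) + ((i:ℝ) - r) * d i) / k := by
          intro i
          set m := r + k * q with hm
          rcases le_or_gt i m with h | h
          · have hdd : d (i+1) = ((m:ℝ) - i) * d i := by
              simp only [hd, Nat.descFactorial_succ]
              push_cast [Nat.cast_sub h]
              ring
            have hq : (q:ℝ) * (k:ℝ) = (m:ℝ) - r := by rw [hm]; push_cast; ring
            rw [hdd, eq_div_iff hk]
            linear_combination d i * hq
          · have hd1 : m.descFactorial i = 0 := Nat.descFactorial_eq_zero_iff_lt.2 h
            have hd2 : m.descFactorial (i+1) = 0 := Nat.descFactorial_eq_zero_iff_lt.2 (by omega)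
            simp [hd, hd1, hd2]
        have step : (q:ℝ)^(l+1) = ∑ i ∈ Finset.range (l+1),
            b i * ((d (i+1) + ((i:ℝ) - r) * d i) / k) := by
          rw [pow_succ, hbq q, Finset.sum_mul]
          refine Finset.sum_congr rfl fun i _ => ?_
          rw [mul_assoc, mul_comm (d i) (q:ℝ), key i]
        have hLHS : ∑ i ∈ range (l+1), b i * ((d (i+1) + ((i:ℝ)-r) * d i)/k)
            = (∑ i ∈ range (l+1), (b i / k) * d (i+1))
              + ∑ i ∈ range (l+1), (((i:ℝ)-r) * b i / k) * d i := by
          rw [← Finset.sum_add_distrib]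
          exact Finset.sum_congr rfl fun i _ => by ring
        rw [step, hLHS]
        have hB : ∑ i ∈ range (l+2), (((i:ℝ)-r) * b i / k) * d i
            = ∑ i ∈ range (l+1), ((((i+1:ℕ):ℝ)-r) * b (i+1) / k) * d (i+1)
              + (((0:ℕ):ℝ)-r) * b 0 / k * d 0 :=
          Finset.sum_range_succ' (fun i => (((i:ℝ)-r) * b i / k) * d i) (l+1)
        have hB2 : ∑ i ∈ range (l+2), (((i:ℝ)-r) * b i / k) * d i
            = ∑ i ∈ range (l+1), (((i:ℝ)-r) * b i / k) * d i
              + ((((l+1:ℕ)):ℝ)-r) * b (l+1) / k * d (l+1) :=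
          Finset.sum_range_succ (fun i => (((i:ℝ)-r) * b i / k) * d i) (l+1)
        rw [h0] at hB2
        simp only [mul_zero, zero_mul, zero_div, add_zero] at hB2
        calc (∑ i ∈ range (l+1), (b i / k) * d (i+1))
              + ∑ i ∈ range (l+1), (((i:ℝ)-r) * b i / k) * d i
            = (∑ i ∈ range (l+1), (b i / k) * d (i+1))
              + (∑ i ∈ range (l+1), ((((i+1:ℕ):ℝ)-r) * b (i+1) / k) * d (i+1)
                 + (((0:ℕ):ℝ)-r) * b 0 / k * d 0) := by rw [← hB, hB2]
          _ = ∑ i ∈ range (l+1), c (i+1) * d (i+1) + c 0 * d 0 := by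
              rw [← add_assoc, ← Finset.sum_add_distrib]
              congr 1
              · refine Finset.sum_congr rfl fun i _ => ?_
                simp only [hc, if_neg (Nat.succ_ne_zero i), Nat.add_sub_cancel]
                push_cast
                ring
              · simp [hc]
          _ = ∑ j ∈ range (l+1+1), c j * d j := (Finset.sum_range_succ' (fun j => c j * d j) (l+1)).symm





lemma aux_geom (k : ℕ) (hk : k ≠ 0) (t : ℤ) :
    ∑ j ∈ Finset.range k, (Complex.exp (2 * Real.pi * Complex.I / k) ^ t) ^ j
      = if (k:ℤ) ∣ t then (k:ℂ) else 0 := by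
  have hprim : IsPrimitiveRoot (Complex.exp (2 * Real.pi * Complex.I / k)) k :=
    Complex.isPrimitiveRoot_exp k hk
  set ω := Complex.exp (2 * Real.pi * Complex.I / k) with hω
  by_cases hdvd : (k:ℤ) ∣ t
  · rw [if_pos hdvd, (hprim.zpow_eq_one_iff_dvd t).2 hdvd]
    simp
  · rw [if_neg hdvd]
    have hne : ω ^ t ≠ 1 := fun h => hdvd ((hprim.zpow_eq_one_iff_dvd t).1 h)
    rw [geom_sum_eq hne k]
    have : (ω ^ t) ^ k = 1 := by
      rw [← zpow_natCast (ω ^ t) k, ← zpow_mul, mul_comm, zpow_mul, zpow_natCast,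
        hprim.pow_eq_one, one_zpow]
    rw [this]
    simp

lemma aux_norm {F : ℝ} (hF0 : 0 < F) (hF1 : F < 1) {w : ℂ} (hw : ‖w‖ = 1) (hw1 : w ≠ 1) :
    1 - F < ‖1 - w * F‖ := by
  have hnsq : w.re^2 + w.im^2 = 1 := by
    have h1 : Complex.normSq w = 1 := by
      rw [← Complex.sq_norm, hw]; norm_num
    rw [Complex.normSq_apply] at h1
    nlinarith
  have hre : w.re < 1 := by
    rcases lt_or_eq_of_le (show w.re ≤ 1 by nlinarith [sq_nonneg w.im]) with h | h
    · exact h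
    · exfalso
      apply hw1
      have him : w.im = 0 := by nlinarith
      apply Complex.ext <;> simp [him, ← h]
  have hcalc : ‖1 - w * (F:ℂ)‖^2 = 1 - 2*F*w.re + F^2 := by
    rw [Complex.sq_norm, Complex.normSq_apply]
    simp [Complex.sub_re, Complex.sub_im, Complex.mul_re, Complex.mul_im]
    nlinarith
  have h2 : (1 - F)^2 < ‖1 - w * (F:ℂ)‖^2 := by
    rw [hcalc]; nlinarith
  exact lt_of_pow_lt_pow_left₀ 2 (norm_nonneg _) h2





noncomputable def rou (k : ℕ) : ℂ := Complex.exp (2 * Real.pi * Complex.I / k)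

lemma aux_hasSum (k r : ℕ) (hk : 1 ≤ k) (hr : r < k) {F : ℝ} (hF0 : 0 < F) (hF1 : F < 1)
    (n i : ℕ) :
    HasSum (fun q : ℕ => ((n + r + k*q).choose (n+i) : ℂ) * (F:ℂ)^(r + k*q))
      ((k:ℂ)⁻¹ * ∑ j ∈ Finset.range k,
         (rou k ^ (j*r))⁻¹ * ((rou k ^ j * (F:ℂ))^i
           * (1/(1 - rou k ^ j * (F:ℂ))^(n+i+1)))) := by
  set ω := rou k with hωdef
  have hprim : IsPrimitiveRoot ω k := Complex.isPrimitiveRoot_exp k (by omega)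
  have hω0 : ω ≠ 0 := Complex.exp_ne_zero _
  have hωnorm : ‖ω‖ = 1 := hprim.norm'_eq_one (by omega)
  have hwnorm : ∀ j : ℕ, ‖ω ^ j * (F:ℂ)‖ = F := by
    intro j
    rw [norm_mul, norm_pow, hωnorm, one_pow, one_mul, Complex.norm_real,
      Real.norm_of_nonneg hF0.le]
  have hwlt : ∀ j : ℕ, ‖ω ^ j * (F:ℂ)‖ < 1 := fun j => by rw [hwnorm j]; exact hF1
  -- shifted geometric series
  have h3 : ∀ j : ℕ, HasSum (fun m : ℕ => ((n + m).choose (n+i) : ℂ) * (ω^j * F)^m)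
      ((ω^j*F)^i * (1/(1 - ω^j*F)^(n+i+1))) := by
    intro j
    set w := ω^j * (F:ℂ) with hw
    have h1 : HasSum (fun m : ℕ => ((m + (n+i)).choose (n+i) : ℂ) * w^m)
        (1/(1-w)^(n+i+1)) := by
      exact hasSum_choose_mul_geometric_of_norm_lt_one (𝕜 := ℂ) (n+i) (hwlt j)
    have h2 : HasSum (fun m : ℕ => (fun m' : ℕ => ((n + m').choose (n+i) : ℂ) * w^m') (m + i))
        (w^i * (1/(1-w)^(n+i+1))) := by
      refine (h1.mul_left (w^i)).congr_fun fun m => ?_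
      show ((n + (m+i)).choose (n+i) : ℂ) * w^(m+i) = w^i * (((m + (n+i)).choose (n+i) : ℂ) * w^m)
      rw [show n + (m+i) = m + (n+i) by omega, pow_add]
      ring
    have := (hasSum_nat_add_iff (f := fun m' : ℕ => ((n + m').choose (n+i) : ℂ) * w^m') i).mp h2
    have hz : ∑ m ∈ Finset.range i, ((n + m).choose (n+i) : ℂ) * w^m = 0 := by
      refine Finset.sum_eq_zero fun m hm => ?_
      rw [Nat.choose_eq_zero_of_lt (by simp at hm; omega)]
      simp
    rwa [hz, add_zero] at this
  -- multiply by coefficients and sum over j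
  have h5 : HasSum
      (fun m : ℕ => ∑ j ∈ Finset.range k, (ω^(j*r))⁻¹ * (((n + m).choose (n+i) : ℂ) * (ω^j*F)^m))
      (∑ j ∈ Finset.range k, (ω^(j*r))⁻¹ * ((ω^j*F)^i * (1/(1 - ω^j*F)^(n+i+1)))) :=
    hasSum_sum fun j _ => (h3 j).mul_left _
  -- pointwise: roots of unity filter
  have hfilter : ∀ m : ℕ,
      ∑ j ∈ Finset.range k, (ω^(j*r))⁻¹ * (((n + m).choose (n+i) : ℂ) * (ω^j*F)^m)
      = (if (k:ℤ) ∣ ((m:ℤ) - r) then (k:ℂ) else 0) * (((n + m).choose (n+i) : ℂ) * (F:ℂ)^m) := by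
    intro m
    have hterm : ∀ j : ℕ, (ω^(j*r))⁻¹ * (((n + m).choose (n+i) : ℂ) * (ω^j*F)^m)
        = (ω ^ ((m:ℤ) - r))^j * (((n + m).choose (n+i) : ℂ) * (F:ℂ)^m) := by
      intro j
      have hz : (ω^(j*r))⁻¹ * (ω^j)^m = (ω^((m:ℤ)-(r:ℤ)))^j := by
        rw [← pow_mul, ← zpow_natCast ω (j*m), ← zpow_natCast ω (j*r), ← zpow_neg,
          ← zpow_add₀ hω0, ← zpow_natCast (ω ^ ((m:ℤ)-(r:ℤ))) j, ← zpow_mul]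
        congr 1
        push_cast
        ring
      rw [mul_pow]
      calc (ω^(j*r))⁻¹ * (((n + m).choose (n+i) : ℂ) * ((ω^j)^m * (F:ℂ)^m))
          = ((ω^(j*r))⁻¹ * (ω^j)^m) * (((n + m).choose (n+i) : ℂ) * (F:ℂ)^m) := by ring
        _ = _ := by rw [hz]
    rw [Finset.sum_congr rfl fun j _ => hterm j, ← Finset.sum_mul]
    congr 1
    exact aux_geom k (by omega) _
  have h6 := (h5.congr_fun fun m => (hfilter m).symm).mul_left (k:ℂ)⁻¹
  -- reindex over q ↦ r + k q
  have hG : Function.Injective (fun q : ℕ => r + k*q) := by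
    intro a b h
    simp only at h
    have : k * a = k * b := by omega
    exact Nat.eq_of_mul_eq_mul_left (by omega) this
  have hvanish : ∀ m : ℕ, m ∉ Set.range (fun q : ℕ => r + k*q) →
      (k:ℂ)⁻¹ * ((if (k:ℤ) ∣ ((m:ℤ) - r) then (k:ℂ) else 0)
        * (((n + m).choose (n+i) : ℂ) * (F:ℂ)^m)) = 0 := by
    intro m hm
    rw [if_neg, zero_mul, mul_zero]
    rintro ⟨t, ht⟩
    have ht0 : 0 ≤ t := by
      by_contra h
      push_neg at h
      have h1 : t ≤ -1 := by omega
      have h2 : (k:ℤ) * t ≤ (k:ℤ) * (-1) := by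
        apply mul_le_mul_of_nonneg_left h1 (by positivity)
      have h3 : (0:ℤ) ≤ m := Int.natCast_nonneg m
      have h4 : (r:ℤ) < k := by exact_mod_cast hr
      omega
    apply hm
    refine ⟨t.toNat, ?_⟩
    have : (m:ℤ) = r + k * t := by omega
    have h2 : (m:ℤ) = r + k * (t.toNat:ℤ) := by rwa [Int.toNat_of_nonneg ht0]
    exact_mod_cast h2.symm
  have h7 := (Function.Injective.hasSum_iff hG hvanish).mpr h6
  refine h7.congr_fun fun q => ?_
  simp only [Function.comp_apply]
  rw [show n + (r + k*q) = n + r + k*q by omega]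
  rw [if_pos ⟨q, by push_cast; ring⟩]
  rw [← mul_assoc, inv_mul_cancel₀ (by exact_mod_cast (by omega : k ≠ 0) : (k:ℂ) ≠ 0), one_mul]

lemma aux_lim (k r : ℕ) (hk : 1 ≤ k) {F : ℝ} (hF0 : 0 < F) (hF1 : F < 1) (i : ℕ) :
    Filter.Tendsto (fun n : ℕ => ((1:ℂ)-(F:ℂ))^n * ((k:ℂ)⁻¹ * ∑ j ∈ Finset.range k,
        (rou k ^ (j*r))⁻¹ * ((rou k ^ j * (F:ℂ))^i * (1/(1 - rou k ^ j * (F:ℂ))^(n+i+1)))))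
      Filter.atTop (nhds ((k:ℂ)⁻¹ * ((F:ℂ)^i * (1/(1-(F:ℂ))^(i+1))))) := by
  set ω := rou k with hωdef
  have hprim : IsPrimitiveRoot ω k := Complex.isPrimitiveRoot_exp k (by omega)
  have hωnorm : ‖ω‖ = 1 := hprim.norm'_eq_one (by omega)
  have hwnorm : ∀ j : ℕ, ‖ω ^ j * (F:ℂ)‖ = F := by
    intro j
    rw [norm_mul, norm_pow, hωnorm, one_pow, one_mul, Complex.norm_real,
      Real.norm_of_nonneg hF0.le]
  have hne : ∀ j : ℕ, (1:ℂ) - ω^j * F ≠ 0 := by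
    intro j h
    have h1 : (ω^j * (F:ℂ)) = 1 := (sub_eq_zero.mp h).symm
    have := hwnorm j
    rw [h1] at this
    simp at this
    exact absurd this (by linarith)
  have hF1' : (1:ℂ) - (F:ℂ) ≠ 0 := by
    intro h
    have : (F:ℂ) = 1 := (sub_eq_zero.mp h).symm
    have : F = 1 := by exact_mod_cast this
    linarith
  set C : ℕ → ℂ := fun j => (ω^(j*r))⁻¹ * ((ω^j*(F:ℂ))^i * (1/(1-ω^j*(F:ℂ))^(i+1))) with hC
  have hrw : ∀ (j n : ℕ), ((1:ℂ)-(F:ℂ))^n * ((ω^(j*r))⁻¹ * ((ω^j*(F:ℂ))^i * (1/(1-ω^j*(F:ℂ))^(n+i+1))))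
      = C j * (((1-(F:ℂ))/(1-ω^j*(F:ℂ)))^n) := by
    intro j n
    rw [hC]
    simp only [div_pow, pow_add]
    field_simp
  have hjlim : ∀ j ∈ Finset.range k, Filter.Tendsto
      (fun n:ℕ => (((1-(F:ℂ))/(1-ω^j*(F:ℂ)))^n)) Filter.atTop (nhds (if j = 0 then 1 else 0)) := by
    intro j hj
    rcases Nat.eq_zero_or_pos j with h0 | h0
    · subst h0
      rw [if_pos rfl]
      have : ((1-(F:ℂ))/(1-ω^0*(F:ℂ))) = 1 := by
        rw [pow_zero, one_mul]
        exact div_self hF1'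
      rw [this]
      simp only [one_pow]
      exact tendsto_const_nhds
    · rw [if_neg (by omega)]
      apply tendsto_pow_atTop_nhds_zero_of_norm_lt_one
      rw [norm_div]
      have h1 : ‖(1:ℂ) - (F:ℂ)‖ = 1 - F := by
        rw [show (1:ℂ) - (F:ℂ) = ((1 - F : ℝ):ℂ) by push_cast; ring, Complex.norm_real,
          Real.norm_of_nonneg (by linarith)]
      have h2 : 1 - F < ‖(1:ℂ) - ω^j*(F:ℂ)‖ := by
        apply aux_norm hF0 hF1
        · rw [norm_pow, hωnorm, one_pow]
        · exact hprim.pow_ne_one_of_pos_of_lt h0.ne' (Finset.mem_range.mp hj)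
      rw [h1]
      rw [div_lt_one (by linarith)]
      exact h2
  have hsum := (tendsto_finset_sum (Finset.range k)
    (fun j hj => ((hjlim j hj).const_mul (C j)))).const_mul ((k:ℂ)⁻¹)
  have hval : ((k:ℂ)⁻¹ * ∑ j ∈ Finset.range k, C j * (if j = 0 then 1 else 0))
      = (k:ℂ)⁻¹ * ((F:ℂ)^i * (1/(1-(F:ℂ))^(i+1))) := by
    congr 1
    have hstep : ∀ j ∈ Finset.range k, C j * (if j = 0 then 1 else 0)
        = if j = 0 then C j else 0 := fun j _ => by rw [mul_ite, mul_one, mul_zero]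
    rw [Finset.sum_congr rfl hstep]
    rw [Finset.sum_ite_eq' (Finset.range k) 0 C, if_pos (Finset.mem_range.mpr (by omega))]
    rw [hC]
    simp
  rw [hval] at hsum
  refine Filter.Tendsto.congr (fun n => ?_) hsum
  have hn : ∑ j ∈ Finset.range k, C j * (((1-(F:ℂ))/(1-ω^j*(F:ℂ)))^n)
      = ∑ j ∈ Finset.range k, ((1:ℂ)-(F:ℂ))^n
        * ((ω^(j*r))⁻¹ * ((ω^j*(F:ℂ))^i * (1/(1-ω^j*(F:ℂ))^(n+i+1)))) :=
    Finset.sum_congr rfl fun j _ => (hrw j n).symm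
  rw [hn, ← Finset.mul_sum]
  ring

lemma aux_desc (i : ℕ) :
    Filter.Tendsto (fun n : ℕ => ((n+i).descFactorial i : ℝ) / (n:ℝ)^i)
      Filter.atTop (nhds 1) := by
  have hfac : ∀ c : ℕ, Filter.Tendsto (fun n : ℕ => ((n:ℝ) + c) / n) Filter.atTop (nhds 1) := by
    intro c
    have h1 : Filter.Tendsto (fun n : ℕ => 1 + (c:ℝ) * (1/n)) Filter.atTop (nhds (1 + c * 0)) :=
      tendsto_const_nhds.add (tendsto_const_nhds.mul tendsto_one_div_atTop_nhds_zero_nat)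
    rw [mul_zero, add_zero] at h1
    apply h1.congr'
    filter_upwards [Filter.eventually_ge_atTop 1] with n hn
    have : (n:ℝ) ≠ 0 := by positivity
    field_simp
  have hprod := tendsto_finset_prod (Finset.range i)
    (fun j _ => hfac (i - j))
  rw [Finset.prod_const_one] at hprod
  apply hprod.congr'
  filter_upwards [Filter.eventually_ge_atTop 1] with n hn
  have hn0 : (n:ℝ) ≠ 0 := by positivity
  rw [Nat.descFactorial_eq_prod_range]
  rw [Nat.cast_prod]
  have hcast : ∀ j ∈ Finset.range i, ((n + i - j : ℕ) : ℝ) = (n:ℝ) + ((i - j : ℕ):ℝ) := by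
    intro j hj
    have : n + i - j = n + (i - j) := by
      have := Finset.mem_range.mp hj; omega
    rw [this]; push_cast; ring
  rw [Finset.prod_congr rfl hcast]
  rw [show (n:ℝ)^i = ∏ _j ∈ Finset.range i, (n:ℝ) by rw [Finset.prod_const, Finset.card_range]]
  rw [← Finset.prod_div_distrib]

/-- For real `0 < E < 1`, `F = E^{1/k}`, fixed `k ≥ 1`, `0 ≤ r ≤ k-1`, `l ≥ 0`,
the sequence `S n = ∑_q C(n+r+kq, n) E^q q^l` is asymptotically equivalent to
`n^l (1-F)^{-n}`: the ratio tends to a finite nonzero constant. -/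
theorem statement2 (k : ℕ) (hk : 1 ≤ k) (E : ℝ) (hE0 : 0 < E) (hE1 : E < 1)
    (F : ℝ) (hF : F = E ^ ((1 : ℝ) / k))
    (r l : ℕ) (hr : r ≤ k - 1)
    (S : ℕ → ℝ)
    (hS : ∀ n, S n = ∑' q : ℕ, ((n + r + k * q).choose n : ℝ) * E ^ q * (q : ℝ) ^ l) :
    ∃ C : ℝ, C ≠ 0 ∧
      Tendsto (fun n : ℕ => S n / ((n : ℝ) ^ l * (1 - F) ^ (-(n : ℤ)))) atTop (nhds C) := by
  have hk0 : (k:ℝ) ≠ 0 := Nat.cast_ne_zero.mpr (by omega)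
  have hrk : r < k := by omega
  have hF0 : 0 < F := hF ▸ Real.rpow_pos_of_pos hE0 _
  have hF1 : F < 1 := by
    rw [hF]; apply Real.rpow_lt_one hE0.le hE1; positivity
  have h1F : (0:ℝ) < 1 - F := by linarith
  have hE : E = F^k := by
    rw [hF, ← Real.rpow_natCast (E ^ ((1:ℝ)/k)) k, ← Real.rpow_mul hE0.le,
      one_div, inv_mul_cancel₀ hk0, Real.rpow_one]
  obtain ⟨b, hbl, hb0, hbq⟩ := aux_bcoeff k r hk0 l
  set gR : ℕ → ℕ → ℝ := fun n i => ((k:ℂ)⁻¹ * ∑ j ∈ Finset.range k,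
      (rou k ^ (j*r))⁻¹ * ((rou k ^ j * (F:ℂ))^i
        * (1/(1 - rou k ^ j * (F:ℂ))^(n+i+1)))).re with hgR
  have hGsumR : ∀ n i : ℕ,
      HasSum (fun q : ℕ => ((n + r + k*q).choose (n+i) : ℝ) * F^(r + k*q)) (gR n i) := by
    intro n i
    have h2 := Complex.hasSum_re (aux_hasSum k r hk hrk hF0 hF1 n i)
    refine h2.congr_fun fun q => ?_
    rw [show ((n + r + k*q).choose (n+i) : ℂ) * (F:ℂ)^(r + k*q)
        = ((((n + r + k*q).choose (n+i) : ℝ) * F^(r + k*q) : ℝ) : ℂ) by push_cast; ring,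
      Complex.ofReal_re]
  have hFr : (F:ℝ)^r ≠ 0 := by positivity
  have hSeq : ∀ n, S n = ∑ i ∈ Finset.range (l+1),
      (b i * ((n+i).descFactorial i : ℝ) * ((F:ℝ)^r)⁻¹) * gR n i := by
    intro n
    rw [hS n]
    have hhs : HasSum (fun q : ℕ => ((n + r + k*q).choose n : ℝ) * E^q * (q:ℝ)^l)
        (∑ i ∈ Finset.range (l+1),
          (b i * ((n+i).descFactorial i : ℝ) * ((F:ℝ)^r)⁻¹) * gR n i) := by
      have hsum := hasSum_sum (s := Finset.range (l+1))
        (f := fun i q => (b i * ((n+i).descFactorial i : ℝ) * ((F:ℝ)^r)⁻¹)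
          * (((n + r + k*q).choose (n+i) : ℝ) * F^(r + k*q)))
        (a := fun i => (b i * ((n+i).descFactorial i : ℝ) * ((F:ℝ)^r)⁻¹) * gR n i)
        (fun i _ => (hGsumR n i).mul_left _)
      refine hsum.congr_fun fun q => ?_
      have hEq : E^q = F^(k*q) := by rw [hE, ← pow_mul]
      have hFq : F^(k*q) = ((F:ℝ)^r)⁻¹ * F^(r + k*q) := by
        rw [pow_add, ← mul_assoc, inv_mul_cancel₀ hFr, one_mul]
      rw [hEq, hFq, hbq q, Finset.mul_sum]
      refine Finset.sum_congr rfl fun i _ => ?_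
      have hch : (((r + k*q).descFactorial i : ℕ) : ℝ) * ((n + r + k*q).choose n : ℝ)
          = (((n+i).descFactorial i : ℕ) : ℝ) * ((n + r + k*q).choose (n+i) : ℝ) := by
        have := aux_choose n i (r + k*q)
        rw [show n + (r + k*q) = n + r + k*q by omega] at this
        exact_mod_cast congrArg (Nat.cast : ℕ → ℝ) this
      calc ((n + r + k*q).choose n : ℝ) * (((F:ℝ)^r)⁻¹ * F^(r + k*q))
            * (b i * (((r + k*q).descFactorial i : ℕ) : ℝ))
          = b i * ((((r + k*q).descFactorial i : ℕ) : ℝ) * ((n + r + k*q).choose n : ℝ))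
            * (((F:ℝ)^r)⁻¹ * F^(r + k*q)) := by ring
        _ = b i * ((((n+i).descFactorial i : ℕ) : ℝ) * ((n + r + k*q).choose (n+i) : ℝ))
            * (((F:ℝ)^r)⁻¹ * F^(r + k*q)) := by rw [hch]
        _ = _ := by ring
    exact hhs.tsum_eq
  have hBlim : ∀ i : ℕ, Tendsto (fun n : ℕ => (1-F)^n * gR n i) atTop
      (nhds ((k:ℝ)⁻¹ * (F^i * (1/(1-F)^(i+1))))) := by
    intro i
    have hc := aux_lim k r hk hF0 hF1 i
    have hre := (Complex.continuous_re.tendsto _).comp hc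
    have heq : ∀ n : ℕ, (Complex.re ∘ (fun n : ℕ => ((1:ℂ)-(F:ℂ))^n * ((k:ℂ)⁻¹
        * ∑ j ∈ Finset.range k, (rou k ^ (j*r))⁻¹ * ((rou k ^ j * (F:ℂ))^i
          * (1/(1 - rou k ^ j * (F:ℂ))^(n+i+1)))))) n = (1-F)^n * gR n i := by
      intro n
      show (((1:ℂ)-(F:ℂ))^n * _).re = _
      rw [show ((1:ℂ)-(F:ℂ))^n = (((1-F)^n : ℝ) : ℂ) by push_cast; ring,
        Complex.re_ofReal_mul]
    have hval : ((k:ℂ)⁻¹ * ((F:ℂ)^i * (1/(1-(F:ℂ))^(i+1)))).re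
        = (k:ℝ)⁻¹ * (F^i * (1/(1-F)^(i+1))) := by
      rw [show (k:ℂ)⁻¹ * ((F:ℂ)^i * (1/(1-(F:ℂ))^(i+1)))
          = (((k:ℝ)⁻¹ * (F^i * (1/(1-F)^(i+1))) : ℝ) : ℂ) by push_cast; ring,
        Complex.ofReal_re]
    rw [← hval]
    exact hre.congr heq
  have hdesc : ∀ i, i ≤ l → Tendsto (fun n : ℕ => ((n+i).descFactorial i : ℝ) / (n:ℝ)^l)
      atTop (nhds (if i = l then 1 else 0)) := by
    intro i hi
    rcases eq_or_lt_of_le hi with h | h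
    · subst h
      rw [if_pos rfl]
      exact aux_desc i
    · rw [if_neg (by omega)]
      have h2 : Tendsto (fun n : ℕ => ((n:ℝ)^(l-i))⁻¹) atTop (nhds 0) := by
        apply Tendsto.inv_tendsto_atTop
        apply Tendsto.comp (tendsto_pow_atTop (n := l - i) (by omega)) tendsto_natCast_atTop_atTop
      have h3 := (aux_desc i).mul h2
      rw [mul_zero] at h3
      apply h3.congr'
      filter_upwards [eventually_ge_atTop 1] with n hn
      have hn0 : (n:ℝ) ≠ 0 := by positivity
      rw [show (n:ℝ)^l = (n:ℝ)^i * (n:ℝ)^(l-i) by rw [← pow_add]; congr 1; omega]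
      field_simp
  set L : ℕ → ℝ := fun i => (b i * ((F:ℝ)^r)⁻¹) * ((if i = l then (1:ℝ) else 0)
    * ((k:ℝ)⁻¹ * (F^i * (1/(1-F)^(i+1))))) with hL
  have hterm : ∀ i ∈ Finset.range (l+1), Tendsto (fun n : ℕ =>
      (b i * ((F:ℝ)^r)⁻¹) * ((((n+i).descFactorial i : ℝ) / (n:ℝ)^l) * ((1-F)^n * gR n i)))
      atTop (nhds (L i)) := by
    intro i hi
    exact ((hdesc i (by simp at hi; omega)).mul (hBlim i)).const_mul _
  have htot := tendsto_finset_sum (Finset.range (l+1)) hterm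
  have hCval : ∑ i ∈ Finset.range (l+1), L i
      = ((k:ℝ)^l)⁻¹ * ((F:ℝ)^r)⁻¹ * ((k:ℝ)⁻¹ * (F^l * (1/(1-F)^(l+1)))) := by
    have hstep : ∀ i ∈ Finset.range (l+1), L i
        = if i = l then (b i * ((F:ℝ)^r)⁻¹) * ((k:ℝ)⁻¹ * (F^i * (1/(1-F)^(i+1)))) else 0 := by
      intro i _
      rw [hL]
      by_cases h : i = l <;> simp [h]
    rw [Finset.sum_congr rfl hstep, Finset.sum_ite_eq' (Finset.range (l+1)) l
      (fun i => (b i * ((F:ℝ)^r)⁻¹) * ((k:ℝ)⁻¹ * (F^i * (1/(1-F)^(i+1))))),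
      if_pos (Finset.mem_range.mpr (by omega)), hbl]
  refine ⟨∑ i ∈ Finset.range (l+1), L i, ?_, ?_⟩
  · rw [hCval]
    positivity
  · apply htot.congr'
    filter_upwards [eventually_ge_atTop 1] with n hn
    have hn0 : (n:ℝ) ≠ 0 := Nat.cast_ne_zero.mpr (by omega)
    rw [hSeq n, zpow_neg, zpow_natCast, Finset.sum_div]
    refine Finset.sum_congr rfl fun i _ => ?_
    have h1Fn : ((1:ℝ)-F)^n ≠ 0 := by positivity
    have hnl : (n:ℝ)^l ≠ 0 := by positivity
    field_simp
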